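/- Let A be a commutative ring and F a bounded-above complex of finite free A-modules with F^n = 0 for n > 0. Suppose A is local with maximal ideal m, and suppose H^i(F ⊗^L_A A/m) = 0 for all i < n (for some n ≤ 0). Then the cokernel of F^{n-1} → F^n satisfies Tor_i^A(coker, A/m) = 0 for all i > 0; in particular, if A is noetherian this cokernel is free. -/

import Mathlib

open CategoryTheory Limits MonoidalCategory

/-- Degreewise tensor product of a complex of modules with a fixed module.
Since the complexes considered below have free (hence flat) components, this
computes the derived tensor product. -/
noncomputable def cxTensor {A : Type} [CommRing A]
    (K : CochainComplex (ModuleCat.{0} A) ℤ) (M : ModuleCat.{0} A) :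
    CochainComplex (ModuleCat.{0} A) ℤ :=
  ((tensorRight M).mapHomologicalComplex (ComplexShape.up ℤ)).obj K

set_option linter.unusedVariables false

section CokerFree

open IsLocalRing TensorProduct

variable {R : Type} [CommRing R] [IsLocalRing R]
  {L M N : Type} [AddCommGroup L] [Module R L] [AddCommGroup M] [Module R M]
  [AddCommGroup N] [Module R N]

local notation "k" => ResidueField R
local notation "𝔪" => maximalIdeal R

lemma coker_free [Module.Finite R M] [Module.Finite R N] [Module.Free R N]
    (d1 : L →ₗ[R] M) (d2 : M →ₗ[R] N) (hc : ∀ x, d2 (d1 x) = 0)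
    (hex : ∀ x : k ⊗[R] M, d2.baseChange k x = 0 →
      ∃ y : k ⊗[R] L, d1.baseChange k y = x) :
    Module.Free R (N ⧸ LinearMap.range d2) := by
  classical
  have hsurjM := TensorProduct.mk_surjective R M k Ideal.Quotient.mk_surjective
  have hsurjL := TensorProduct.mk_surjective R L k Ideal.Quotient.mk_surjective
  -- kernel of `1 ⊗ ·` is `𝔪 • ⊤`
  have hker : ∀ z : M, (1 : k) ⊗ₜ[R] z = 0 → z ∈ (𝔪 • ⊤ : Submodule R M) := by
    intro z hz
    have h1 : (1 : k) = Ideal.Quotient.mk 𝔪 1 := rfl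
    have := congrArg (quotTensorEquivQuotSMul M 𝔪) hz
    have h2 : quotTensorEquivQuotSMul M 𝔪 ((1 : R ⧸ 𝔪) ⊗ₜ[R] z) = 0 := by
      rw [← map_zero (quotTensorEquivQuotSMul M 𝔪)]; exact this
    rw [quotTensorEquivQuotSMul_mk_one_tmul] at h2
    exact (Submodule.Quotient.mk_eq_zero _).mp h2
  set W := LinearMap.range d2 with hW
  have hWfg : W.FG := by
    rw [hW, ← Submodule.map_top]
    exact Submodule.FG.map d2 (Module.Finite.fg_top)
  set Wk : Submodule k (k ⊗[R] N) := LinearMap.range (d2.baseChange k) with hWk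
  haveI : Module.Free k Wk := Module.Free.of_divisionRing (K := k) (V := Wk)
  let ι := Module.Free.ChooseBasisIndex k Wk
  let b : Module.Basis ι k Wk := Module.Free.chooseBasis k Wk
  -- lift basis vectors
  have hb : ∀ i : ι, ∃ u : M, d2.baseChange k ((1 : k) ⊗ₜ[R] u) = (b i : k ⊗[R] N) := by
    intro i
    obtain ⟨x, hx⟩ := (b i).2
    obtain ⟨u, hu⟩ := hsurjM x
    exact ⟨u, by rw [show (1:k) ⊗ₜ[R] u = x from hu, hx]⟩
  choose u hu using hb
  set y : ι → N := fun i => d2 (u i) with hy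
  have hy1 : ∀ i, (1 : k) ⊗ₜ[R] (y i) = (b i : k ⊗[R] N) := by
    intro i
    rw [hy]
    simpa [LinearMap.baseChange_tmul] using hu i
  have hyW : ∀ i, y i ∈ W := fun i => ⟨u i, rfl⟩
  -- Nakayama
  have hspan : W = Submodule.span R (Set.range y) := by
    refine le_antisymm ?_ (Submodule.span_le.mpr (by rintro _ ⟨i, rfl⟩; exact hyW i))
    have hjac : 𝔪 ≤ Ideal.jacobson ⊥ :=
      le_of_eq (IsLocalRing.jacobson_eq_maximalIdeal ⊥ bot_ne_top).symm
    refine Submodule.le_of_le_smul_of_le_jacobson_bot hWfg hjac ?_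
    rintro _ ⟨v, rfl⟩
    -- express `1 ⊗ d2 v` in the basis `b`
    have hmem : d2.baseChange k ((1 : k) ⊗ₜ[R] v) ∈ Wk := ⟨_, rfl⟩
    set wk : Wk := ⟨d2.baseChange k ((1 : k) ⊗ₜ[R] v), hmem⟩ with hwk
    have hrepr : (∑ i, b.repr wk i • b i : Wk) = wk := b.sum_repr wk
    choose a ha using fun i => Ideal.Quotient.mk_surjective (I := 𝔪) (b.repr wk i)
    set v' : M := v - ∑ i, a i • u i with hv'
    have hv'0 : (1 : k) ⊗ₜ[R] (d2 v') = 0 := by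
      have := congrArg (Submodule.subtype Wk) hrepr
      simp only [map_sum, Submodule.coe_smul, Submodule.coe_subtype] at this
      rw [hv', map_sub, map_sum, tmul_sub, tmul_sum]
      have e1 : ∀ i, (1 : k) ⊗ₜ[R] (d2 ((a i) • u i)) = b.repr wk i • (b i : k ⊗[R] N) := by
        intro i
        have h1 : (1 : k) ⊗ₜ[R] (d2 ((a i) • u i)) = a i • ((1 : k) ⊗ₜ[R] (y i)) := by
          rw [map_smul, tmul_smul]
        rw [h1, ← algebraMap_smul k (a i) ((1 : k) ⊗ₜ[R] (y i)),
          show (algebraMap R k) (a i) = Ideal.Quotient.mk 𝔪 (a i) from rfl, ha i, hy1 i]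
      rw [Finset.sum_congr rfl fun i _ => e1 i, this]
      have : (1 : k) ⊗ₜ[R] (d2 v) = (wk : k ⊗[R] N) := by
        rw [hwk]; simp [LinearMap.baseChange_tmul]
      rw [this, sub_self]
    -- use exactness
    have hbc : d2.baseChange k ((1 : k) ⊗ₜ[R] v') = 0 := by
      rw [LinearMap.baseChange_tmul, hv'0]
    obtain ⟨t, ht⟩ := hex _ hbc
    obtain ⟨l, hl⟩ := hsurjL t
    have hvl : v' - d1 l ∈ (𝔪 • ⊤ : Submodule R M) := by
      apply hker
      rw [tmul_sub, sub_eq_zero]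
      have hl' : (1 : k) ⊗ₜ[R] l = t := hl
      calc (1 : k) ⊗ₜ[R] v' = d1.baseChange k t := ht.symm
        _ = d1.baseChange k ((1 : k) ⊗ₜ[R] l) := by rw [hl']
        _ = (1 : k) ⊗ₜ[R] (d1 l) := by rw [LinearMap.baseChange_tmul]
    -- conclude: d2 v ∈ span y ⊔ 𝔪 • W
    have hd2v' : d2 v' ∈ 𝔪 • W := by
      have hstep : d2 (v' - d1 l) = d2 v' := by simp [hc l]
      rw [← hstep]
      have : W = Submodule.map d2 ⊤ := by rw [Submodule.map_top]
      rw [this, ← Submodule.map_smul'']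
      exact Submodule.mem_map_of_mem hvl
    have : d2 v = (∑ i, a i • y i) + d2 v' := by
      rw [hv', map_sub, map_sum]
      simp only [map_smul, ← hy]
      abel
    rw [this]
    exact Submodule.add_mem _
      (Submodule.mem_sup_left (Submodule.sum_mem _ fun i _ =>
        Submodule.smul_mem _ _ (Submodule.subset_span ⟨i, rfl⟩)))
      (Submodule.mem_sup_right hd2v')
  -- the comparison map
  set f' : (ι →₀ R) →ₗ[R] N := Finsupp.linearCombination R y with hf'
  have hrange : LinearMap.range f' = W := by
    rw [hf', Finsupp.range_linearCombination, hspan]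
  haveI : Module.Finite R (ι →₀ R) :=
    Module.Finite.equiv (Finsupp.linearEquivFunOnFinite R R ι).symm
  -- injectivity of the base change of `f'`
  have hinj : Function.Injective (f'.baseChange k) := by
    set B : Module.Basis ι k (k ⊗[R] (ι →₀ R)) := (Finsupp.basisSingleOne).baseChange k with hB
    have hcomp : ∀ i, f'.baseChange k (B i) = (b i : k ⊗[R] N) := by
      intro i
      rw [hB, Module.Basis.baseChange_apply, LinearMap.baseChange_tmul]
      rw [hf']
      rw [show (Finsupp.basisSingleOne : Module.Basis ι R (ι →₀ R)) i = Finsupp.single i 1 from rfl,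
        Finsupp.linearCombination_single, one_smul, hy1]
    rw [← LinearMap.ker_eq_bot (M := k ⊗[R] (ι →₀ R))]
    rw [eq_bot_iff]
    intro x hx
    have hx' : f'.baseChange k x = 0 := hx
    have hxrepr : x = ∑ i, B.repr x i • B i := (B.sum_repr x).symm
    rw [hxrepr, map_sum] at hx'
    simp only [map_smul, hcomp] at hx'
    have : (∑ i, B.repr x i • b i : Wk) = 0 := by
      apply Subtype.ext
      simpa using hx'
    have hzero : ∀ i, B.repr x i = 0 := by
      intro i
      have := congrArg (fun w => b.repr w i) this
      simpa [Finsupp.single_apply] using this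
    simp only [Submodule.mem_bot]
    rw [hxrepr]
    simp [hzero]
  -- conclude via the mathlib lemma
  have hfree := Module.free_of_lTensor_residueField_injective f' W.mkQ
    (Submodule.mkQ_surjective W)
    (by rw [LinearMap.exact_iff, Submodule.ker_mkQ, hrange])
    (by rwa [← LinearMap.baseChange_eq_ltensor])
  exact hfree

end CokerFree

lemma tor_isZero_of_flat {A : Type} [CommRing A] (M N : ModuleCat.{0} A) [Module.Flat A M]
    (i : ℕ) (hi : 0 < i) :
    IsZero (((Tor (ModuleCat.{0} A) i).obj M).obj N) := by
  obtain ⟨j, rfl⟩ : ∃ j, i = j + 1 := ⟨i - 1, by omega⟩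
  let P : ProjectiveResolution N := (HasProjectiveResolution.out (Z := N)).some
  refine IsZero.of_iso ?_ (P.isoLeftDerivedObj ((tensoringLeft _).obj M) (j + 1))
  have hP := P.complex_exactAt_succ j
  rw [HomologicalComplex.exactAt_iff] at hP
  have hmap := Module.Flat.lTensor_shortComplex_exact M _ hP
  have : ((((tensoringLeft (ModuleCat.{0} A)).obj M).mapHomologicalComplex
      (ComplexShape.down ℕ)).obj P.complex).ExactAt (j + 1) := by
    rw [HomologicalComplex.exactAt_iff]
    exact hmap
  exact (HomologicalComplex.exactAt_iff_isZero_homology _ _).mp this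

section Conv

open TensorProduct

variable {R : Type} [CommRing R] (S : Type) [CommRing S] [Algebra R S]
  {L M N : Type} [AddCommGroup L] [Module R L] [AddCommGroup M] [Module R M]
  [AddCommGroup N] [Module R N]

lemma baseChange_exact_of_rTensor_exact
    (d1 : L →ₗ[R] M) (d2 : M →ₗ[R] N)
    (h : ∀ x : M ⊗[R] S, d2.rTensor S x = 0 → ∃ y : L ⊗[R] S, d1.rTensor S y = x)
    (x : S ⊗[R] M) (hx : d2.baseChange S x = 0) :
    ∃ y : S ⊗[R] L, d1.baseChange S y = x := by
  have key2 := LinearMap.congr_fun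
    (LinearMap.comm_comp_rTensor_comp_comm_eq (Q := S) d2) x
  simp only [LinearMap.coe_comp, Function.comp_apply, LinearEquiv.coe_coe] at key2
  have hx0 : d2.rTensor S ((TensorProduct.comm R S M) x) = 0 := by
    apply (TensorProduct.comm R N S).injective
    rw [key2, map_zero]
    rw [LinearMap.baseChange_eq_ltensor] at hx
    exact hx
  obtain ⟨y, hy⟩ := h _ hx0
  refine ⟨(TensorProduct.comm R S L).symm y, ?_⟩
  have key1 := LinearMap.congr_fun
    (LinearMap.comm_comp_rTensor_comp_comm_eq (Q := S) d1) ((TensorProduct.comm R S L).symm y)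
  simp only [LinearMap.coe_comp, Function.comp_apply, LinearEquiv.coe_coe,
    LinearEquiv.apply_symm_apply] at key1
  rw [LinearMap.baseChange_eq_ltensor, ← key1, hy]
  exact (TensorProduct.comm R S M).symm_apply_apply x

end Conv

open TensorProduct in
/-- Let `A` be a commutative local ring with maximal ideal `m` and `F` a
bounded-above cochain complex of finite free `A`-modules with `F^i = 0` for `i > 0`.
Let `n ≤ 0` and suppose `H^i(F ⊗^L A/m) = 0` for all `i < n`.  Then the cokernel of
`F^{n-1} → F^n` satisfies `Tor_i^A(coker, A/m) = 0` for all `i > 0`; in particular,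
if `A` is noetherian this cokernel is free. -/
theorem stmt8 (A : Type) [CommRing A] [IsLocalRing A]
    (F : CochainComplex (ModuleCat.{0} A) ℤ)
    (hfree : ∀ i : ℤ, Module.Free A (F.X i) ∧ Module.Finite A (F.X i))
    (hup : ∀ i : ℤ, 0 < i → IsZero (F.X i))
    (n : ℤ) (hn : n ≤ 0)
    (hvan : ∀ i : ℤ, i < n →
      IsZero ((cxTensor F (ModuleCat.of A (IsLocalRing.ResidueField A))).homology i)) :
    (∀ i : ℕ, 0 < i →
      IsZero (((Tor (ModuleCat.{0} A) i).obj (cokernel (F.d (n - 1) n))).obj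
        (ModuleCat.of A (IsLocalRing.ResidueField A)))) ∧
    (IsNoetherianRing A → Module.Free A ((cokernel (F.d (n - 1) n) : ModuleCat.{0} A))) := by
  haveI := (hfree (n - 2)).1
  haveI := (hfree (n - 2)).2
  haveI := (hfree (n - 1)).1
  haveI := (hfree (n - 1)).2
  haveI := (hfree n).1
  haveI := (hfree n).2
  set kA := ModuleCat.of A (IsLocalRing.ResidueField A) with hkA
  -- exactness of `F ⊗ k` at `n - 1`
  have hexact : ((cxTensor F kA).sc' (n - 2) (n - 1) n).Exact := by
    rw [← HomologicalComplex.exactAt_iff' _ (n - 2) (n - 1) n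
      (by rw [CochainComplex.prev]; ring) (by rw [CochainComplex.next]; ring),
      HomologicalComplex.exactAt_iff_isZero_homology]
    exact hvan (n - 1) (by omega)
  rw [ShortComplex.moduleCat_exact_iff] at hexact
  have hex' : ∀ x : (F.X (n - 1) : Type) ⊗[A] (IsLocalRing.ResidueField A),
      (F.d (n - 1) n).hom.rTensor _ x = 0 →
      ∃ y, (F.d (n - 2) (n - 1)).hom.rTensor _ y = x :=
    hexact
  -- freeness of the cokernel
  have hfreeQ : Module.Free A
      ((F.X n : Type) ⧸ LinearMap.range (F.d (n - 1) n).hom) := by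
    apply coker_free (F.d (n - 2) (n - 1)).hom
    · intro x
      change (F.d (n - 2) (n - 1) ≫ F.d (n - 1) n).hom x = 0
      rw [F.d_comp_d]
      rfl
    · intro x hx
      exact baseChange_exact_of_rTensor_exact _ _ _ hex' x hx
  have e : ((cokernel (F.d (n - 1) n) : ModuleCat.{0} A) : Type) ≃ₗ[A]
      ((F.X n : Type) ⧸ LinearMap.range (F.d (n - 1) n).hom) :=
    (ModuleCat.cokernelIsoRangeQuotient (F.d (n - 1) n)).toLinearEquiv
  haveI hfreeC : Module.Free A ((cokernel (F.d (n - 1) n) : ModuleCat.{0} A)) :=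
    Module.Free.of_equiv e.symm
  haveI : Module.Flat A ((cokernel (F.d (n - 1) n) : ModuleCat.{0} A)) := inferInstance
  exact ⟨fun i hi => tor_isZero_of_flat _ _ i hi, fun _ => hfreeC⟩
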